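/- arXiv:2303.02775 — 3 statements merged into one kernel-verified Lean document; each statement's English description precedes it below -/
import Mathlib

section
/- First-order Trotter error bound: for Hermitian matrices A and B and real t ≥ 0, the spectral-norm difference satisfies ‖exp(-it(A+B)) - exp(-itA)·exp(-itB)‖ ≤ (t²/2)·‖[A,B]‖, where [A,B] = AB - BA. -/
open Matrix Complex
open scoped Matrix.Norms.L2Operator

set_option maxHeartbeats 1600000

namespace TrotterAux

variable {N : ℕ}

noncomputable def E (X : Matrix (Fin N) (Fin N) ℂ) (s : ℝ) : Matrix (Fin N) (Fin N) ℂ :=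
  NormedSpace.exp ((s : ℂ) • X)

lemma hasDerivAt_E (X : Matrix (Fin N) (Fin N) ℂ) (s : ℝ) :
    HasDerivAt (E X) (E X s * X) s := by
  have h := HasDerivAt.scomp (𝕜 := ℝ) s (hasDerivAt_exp_smul_const (𝕂 := ℂ) X (s : ℂ))
    Complex.ofRealCLM.hasDerivAt
  simp [Function.comp] at h
  exact h

lemma hasDerivAt_E' (X : Matrix (Fin N) (Fin N) ℂ) (s : ℝ) :
    HasDerivAt (E X) (X * E X s) s := by
  have h := HasDerivAt.scomp (𝕜 := ℝ) s (hasDerivAt_exp_smul_const' (𝕂 := ℂ) X (s : ℂ))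
    Complex.ofRealCLM.hasDerivAt
  simp [Function.comp] at h
  exact h

lemma comm_E (X : Matrix (Fin N) (Fin N) ℂ) (s : ℝ) : E X s * X = X * E X s :=
  (hasDerivAt_E X s).unique (hasDerivAt_E' X s)

lemma continuous_E (X : Matrix (Fin N) (Fin N) ℂ) : Continuous (E X) :=
  continuous_iff_continuousAt.2 fun s => (hasDerivAt_E X s).continuousAt

lemma E_zero (X : Matrix (Fin N) (Fin N) ℂ) : E X 0 = 1 := by
  simp [E, NormedSpace.exp_zero]

lemma norm_E_le_one {X : Matrix (Fin N) (Fin N) ℂ} (hX : X.IsHermitian) (s : ℝ) :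
    ‖E ((-Complex.I) • X) s‖ ≤ 1 := by
  rcases subsingleton_or_nontrivial (Matrix (Fin N) (Fin N) ℂ) with h | h
  · rw [Subsingleton.elim (E ((-Complex.I) • X) s) 0, norm_zero]; exact zero_le_one
  · have hskew : (s : ℂ) • ((-Complex.I) • X) ∈ skewAdjoint (Matrix (Fin N) (Fin N) ℂ) := by
      rw [skewAdjoint.mem_iff]
      rw [smul_smul, star_smul, Matrix.star_eq_conjTranspose, hX.eq]
      rw [← neg_smul]
      congr 1
      simp [Complex.ext_iff]
    letI : NormedAlgebra ℚ (Matrix (Fin N) (Fin N) ℂ) := .restrictScalars ℚ ℂ _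
    have := NormedSpace.exp_mem_unitary_of_mem_skewAdjoint hskew
    exact le_of_eq (CStarRing.norm_coe_unitary ⟨_, this⟩)

/-- Derivative of `u ↦ E X (s - u)`. -/
lemma hasDerivAt_E_rev (X : Matrix (Fin N) (Fin N) ℂ) (s u : ℝ) :
    HasDerivAt (fun u : ℝ => E X (s - u)) (-(X * E X (s - u))) u := by
  have hsub : HasDerivAt (fun u : ℝ => s - u) (-1) u := by
    simpa using (hasDerivAt_id u).const_sub s
  have h := (hasDerivAt_E' X (s - u)).scomp u hsub
  simp at h
  exact h

/-- Commutator growth bound: `‖[M, e^{sC}]‖ ≤ s ‖[M, C]‖` for `C = -i X`, `X` Hermitian. -/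
lemma comm_bound {X : Matrix (Fin N) (Fin N) ℂ} (hX : X.IsHermitian)
    (M : Matrix (Fin N) (Fin N) ℂ) {s : ℝ} (hs : 0 ≤ s) :
    ‖M * E ((-Complex.I) • X) s - E ((-Complex.I) • X) s * M‖
      ≤ s * ‖M * ((-Complex.I) • X) - ((-Complex.I) • X) * M‖ := by
  set C : Matrix (Fin N) (Fin N) ℂ := (-Complex.I) • X with hCdef
  set c : ℝ := ‖M * C - C * M‖ with hc
  have hf : ∀ u : ℝ, HasDerivAt (fun u => E C (s - u) * (M * E C u))
      (E C (s - u) * ((M * C - C * M) * E C u)) u := by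
    intro u
    have h1 := (hasDerivAt_E_rev C s u).mul ((hasDerivAt_E C u).const_mul M)
    refine h1.congr_deriv ?_
    have e1 : C * E C (s - u) = E C (s - u) * C := (comm_E C (s - u)).symm
    have e2 : E C u * C = C * E C u := comm_E C u
    rw [e2, e1]
    noncomm_ring
  have hcont : Continuous fun u : ℝ => E C (s - u) * ((M * C - C * M) * E C u) :=
    (((continuous_E C).comp (continuous_const.sub continuous_id)).mul
      (continuous_const.mul (continuous_E C)))
  have hftc := intervalIntegral.integral_eq_sub_of_hasDerivAt
    (f := fun u => E C (s - u) * (M * E C u)) (a := 0) (b := s)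
    (fun u _ => hf u) (hcont.intervalIntegrable 0 s)
  have hval : (∫ u in (0:ℝ)..s, E C (s - u) * ((M * C - C * M) * E C u))
      = M * E C s - E C s * M := by
    rw [hftc]; simp [E_zero]
  have hbound : ‖∫ u in (0:ℝ)..s, E C (s - u) * ((M * C - C * M) * E C u)‖ ≤ c * |s - 0| := by
    apply intervalIntegral.norm_integral_le_of_norm_le_const
    intro x hx
    calc ‖E C (s - x) * ((M * C - C * M) * E C x)‖
        ≤ ‖E C (s - x)‖ * (‖M * C - C * M‖ * ‖E C x‖) :=
          (norm_mul_le _ _).trans (by gcongr; exact norm_mul_le _ _)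
      _ ≤ 1 * (‖M * C - C * M‖ * 1) := by
          have h1 : ‖E C (s - x)‖ ≤ 1 := norm_E_le_one hX (s - x)
          have h2 : ‖E C x‖ ≤ 1 := norm_E_le_one hX x
          gcongr
      _ = c := by rw [one_mul, mul_one, ← hc]
  rw [← hval]
  calc ‖∫ u in (0:ℝ)..s, E C (s - u) * ((M * C - C * M) * E C u)‖
      ≤ c * |s - 0| := hbound
    _ = s * c := by rw [sub_zero, _root_.abs_of_nonneg hs, mul_comm]

end TrotterAux

open TrotterAux

/-- First-order Trotter error bound:
`‖exp(-it(A+B)) - exp(-itA)·exp(-itB)‖ ≤ (t²/2)·‖AB - BA‖`. -/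
theorem trotter_first_order_bound {N : ℕ} (A B : Matrix (Fin N) (Fin N) ℂ)
    (hA : A.IsHermitian) (hB : B.IsHermitian) (t : ℝ) (ht : 0 ≤ t) :
    ‖NormedSpace.exp ((-(Complex.I * t)) • (A + B))
        - NormedSpace.exp ((-(Complex.I * t)) • A)
          * NormedSpace.exp ((-(Complex.I * t)) • B)‖
      ≤ t ^ 2 / 2 * ‖A * B - B * A‖ := by
  set CA : Matrix (Fin N) (Fin N) ℂ := (-Complex.I) • A with hCA
  set CB : Matrix (Fin N) (Fin N) ℂ := (-Complex.I) • B with hCB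
  set CAB : Matrix (Fin N) (Fin N) ℂ := (-Complex.I) • (A + B) with hCAB
  have hrw : ∀ X : Matrix (Fin N) (Fin N) ℂ,
      NormedSpace.exp ((-(Complex.I * t)) • X) = E ((-Complex.I) • X) t := by
    intro X
    unfold E
    congr 1
    rw [smul_smul]
    congr 1
    ring
  have hCABsum : CAB = CA + CB := by rw [hCA, hCB, hCAB, smul_add]
  set c : ℝ := ‖A * B - B * A‖ with hc
  -- the commutator identity
  have hcomm : CB * CA - CA * CB = A * B - B * A := by
    rw [hCA, hCB]
    rw [Algebra.smul_mul_assoc, Algebra.smul_mul_assoc, Algebra.mul_smul_comm,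
      Algebra.mul_smul_comm, smul_smul, smul_smul]
    have : (-Complex.I) * (-Complex.I) = -1 := by
      simp [Complex.ext_iff]
    rw [this, neg_one_smul, neg_one_smul, sub_neg_eq_add, neg_add_eq_sub]
  -- derivative of the interpolation
  have hK : ∀ s : ℝ, HasDerivAt (fun s => E CAB (t - s) * (E CA s * E CB s))
      (E CAB (t - s) * ((E CA s * CB - CB * E CA s) * E CB s)) s := by
    intro s
    have h2 : HasDerivAt (fun s => E CA s * E CB s)
        (CA * E CA s * E CB s + E CA s * (E CB s * CB)) s :=
      (hasDerivAt_E' CA s).mul (hasDerivAt_E CB s)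
    have h := (hasDerivAt_E_rev CAB t s).mul h2
    refine h.congr_deriv ?_
    have e1 : CAB * E CAB (t - s) = E CAB (t - s) * CAB := (comm_E CAB (t - s)).symm
    have e2 : E CB s * CB = CB * E CB s := comm_E CB s
    rw [e2, e1, hCABsum]
    noncomm_ring
  have hcont : Continuous fun s : ℝ => E CAB (t - s) * ((E CA s * CB - CB * E CA s) * E CB s) :=
    ((continuous_E CAB).comp (continuous_const.sub continuous_id)).mul
      ((((continuous_E CA).mul continuous_const).sub
        (continuous_const.mul (continuous_E CA))).mul (continuous_E CB))
  have hftc := intervalIntegral.integral_eq_sub_of_hasDerivAt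
    (f := fun s => E CAB (t - s) * (E CA s * E CB s)) (a := 0) (b := t)
    (fun s _ => hK s) (hcont.intervalIntegrable 0 t)
  have hval : (∫ s in (0:ℝ)..t, E CAB (t - s) * ((E CA s * CB - CB * E CA s) * E CB s))
      = E CA t * E CB t - E CAB t := by
    rw [hftc]; simp [E_zero]
  -- pointwise norm bound on the integrand
  have hptwise : ∀ s ∈ Set.Ioc (0:ℝ) t,
      ‖E CAB (t - s) * ((E CA s * CB - CB * E CA s) * E CB s)‖ ≤ s * c := by
    intro s hs
    have hs0 : 0 ≤ s := le_of_lt hs.1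
    have hcb : ‖E CA s * CB - CB * E CA s‖ ≤ s * c := by
      have := comm_bound hA CB hs0
      rw [← hCA] at this
      rw [norm_sub_rev]
      calc ‖CB * E CA s - E CA s * CB‖ ≤ s * ‖CB * CA - CA * CB‖ := this
        _ = s * c := by rw [hcomm, hc]
    calc ‖E CAB (t - s) * ((E CA s * CB - CB * E CA s) * E CB s)‖
        ≤ ‖E CAB (t - s)‖ * (‖E CA s * CB - CB * E CA s‖ * ‖E CB s‖) :=
          (norm_mul_le _ _).trans (by gcongr; exact norm_mul_le _ _)
      _ ≤ 1 * ((s * c) * 1) := by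
          have h1 : ‖E CAB (t - s)‖ ≤ 1 := hCAB ▸ norm_E_le_one (hA.add hB) (t - s)
          have h2 : ‖E CB s‖ ≤ 1 := hCB ▸ norm_E_le_one hB s
          gcongr
      _ = s * c := by ring
  have hInt : IntervalIntegrable (fun s : ℝ => s * c) MeasureTheory.volume 0 t :=
    (continuous_id.mul continuous_const).intervalIntegrable 0 t
  have hnorm : ‖∫ s in (0:ℝ)..t, E CAB (t - s) * ((E CA s * CB - CB * E CA s) * E CB s)‖
      ≤ |∫ s in (0:ℝ)..t, s * c| := by
    refine (intervalIntegral.norm_integral_le_of_norm_le ht ?_ hInt).trans (le_abs_self _)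
    exact Filter.Eventually.of_forall hptwise
  have hintval : (∫ s in (0:ℝ)..t, s * c) = t ^ 2 / 2 * c := by
    rw [intervalIntegral.integral_mul_const, integral_id]
    ring
  have hc0 : (0:ℝ) ≤ c := by rw [hc]; positivity
  rw [hrw (A + B), hrw A, hrw B, ← hCA, ← hCB, ← hCAB]
  rw [← norm_neg, neg_sub, ← hval]
  calc ‖∫ s in (0:ℝ)..t, E CAB (t - s) * ((E CA s * CB - CB * E CA s) * E CB s)‖
      ≤ |∫ s in (0:ℝ)..t, s * c| := hnorm
    _ = t ^ 2 / 2 * c := by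
        rw [hintval, _root_.abs_of_nonneg]
        have h2 : (0:ℝ) ≤ t ^ 2 / 2 := by positivity
        exact mul_nonneg h2 hc0
end

section
/- Repeated Trotter error bound: for Hermitian matrices H_1,...,H_L with Λ = Σ_j ‖H_j‖, time T ≥ 0, and positive integer R, ‖exp(-iT Σ_j H_j) - (Π_j exp(-i(T/R)H_j))^R‖ ≤ ((ΛT)²/R)·e^{ΛT/R}. -/
open Matrix Complex
open scoped Matrix.Norms.L2Operator

open NormedSpace
open scoped Nat
set_option linter.unusedSectionVars false

section TrotterAux

variable {𝔸 : Type*} [NormedRing 𝔸] [NormedAlgebra ℂ 𝔸] [CompleteSpace 𝔸]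

private lemma trotter_real_exp_hasSum (a : ℝ) :
    HasSum (fun n : ℕ => a ^ n / n !) (Real.exp a) := by
  rw [Real.exp_eq_exp_ℝ]
  exact expSeries_div_hasSum_exp a

private lemma trotter_real_exp_tail_hasSum (a : ℝ) :
    HasSum (fun n : ℕ => a ^ (n + 2) / (n + 2)!) (Real.exp a - 1 - a) := by
  have h := trotter_real_exp_hasSum a
  have h2 := (hasSum_nat_add_iff' (f := fun n : ℕ => a ^ n / n !) 2).mpr h
  simpa [Finset.sum_range_succ, sub_sub] using h2

private lemma trotter_norm_exp_sub_one_sub_le (x : 𝔸) :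
    ‖exp x - 1 - x‖ ≤ Real.exp ‖x‖ - 1 - ‖x‖ := by
  have hf : HasSum (fun n : ℕ => (((n + 2)! : ℂ))⁻¹ • x ^ (n + 2)) (exp x - 1 - x) := by
    have h := exp_series_hasSum_exp' (𝕂 := ℂ) x
    have h2 := (hasSum_nat_add_iff' (f := fun n : ℕ => ((n ! : ℂ))⁻¹ • x ^ n) 2).mpr h
    simpa [Finset.sum_range_succ, sub_sub] using h2
  have hg := trotter_real_exp_tail_hasSum ‖x‖
  have hb : ∀ n : ℕ, ‖(((n + 2)! : ℂ))⁻¹ • x ^ (n + 2)‖ ≤ ‖x‖ ^ (n + 2) / (n + 2)! := by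
    intro n
    rw [norm_smul]
    have h1 : ‖(((n + 2)! : ℂ))⁻¹‖ = (((n + 2)! : ℝ))⁻¹ := by
      rw [norm_inv]
      norm_cast
    rw [h1, div_eq_inv_mul]
    have hpow : ‖x ^ (n + 2)‖ ≤ ‖x‖ ^ (n + 2) := norm_pow_le' x (by omega)
    have hfacpos : (0:ℝ) < ((n + 2)! : ℝ) := by positivity
    exact mul_le_mul_of_nonneg_left hpow (by positivity)
  have hsum : Summable fun n : ℕ => ‖(((n + 2)! : ℂ))⁻¹ • x ^ (n + 2)‖ :=
    Summable.of_nonneg_of_le (fun n => norm_nonneg _) hb hg.summable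
  calc ‖exp x - 1 - x‖ = ‖∑' n : ℕ, (((n + 2)! : ℂ))⁻¹ • x ^ (n + 2)‖ := by rw [hf.tsum_eq]
    _ ≤ ∑' n : ℕ, ‖(((n + 2)! : ℂ))⁻¹ • x ^ (n + 2)‖ := norm_tsum_le_tsum_norm hsum
    _ ≤ ∑' n : ℕ, ‖x‖ ^ (n + 2) / (n + 2)! := Summable.tsum_le_tsum hb hsum hg.summable
    _ = Real.exp ‖x‖ - 1 - ‖x‖ := hg.tsum_eq

private lemma trotter_norm_exp_sub_one_le (x : 𝔸) :
    ‖exp x - 1‖ ≤ Real.exp ‖x‖ - 1 := by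
  have h := trotter_norm_exp_sub_one_sub_le x
  have h2 : ‖exp x - 1‖ ≤ ‖exp x - 1 - x‖ + ‖x‖ := by
    simpa using norm_add_le (exp x - 1 - x) x
  linarith

private lemma trotter_norm_exp_le [NormOneClass 𝔸] (x : 𝔸) :
    ‖exp x‖ ≤ Real.exp ‖x‖ := by
  have h := trotter_norm_exp_sub_one_le x
  have h2 : ‖exp x‖ ≤ ‖exp x - 1‖ + 1 := by
    simpa using norm_add_le (exp x - 1) (1 : 𝔸)
  linarith

private lemma trotter_list_norm_sum_le (l : List 𝔸) : ‖l.sum‖ ≤ (l.map norm).sum := by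
  induction l with
  | nil => simp
  | cons x t ih =>
    simp only [List.sum_cons, List.map_cons]
    exact (norm_add_le _ _).trans (by linarith)

private lemma trotter_list_norm_sum_nonneg (l : List 𝔸) : 0 ≤ (l.map norm).sum :=
  List.sum_nonneg (by
    intro a ha
    obtain ⟨x, _, rfl⟩ := List.mem_map.mp ha
    exact norm_nonneg x)

private lemma trotter_prod_exp_bound [NormOneClass 𝔸] (l : List 𝔸) :
    ‖(l.map fun x => NormedSpace.exp x).prod - 1 - l.sum‖
      ≤ Real.exp (l.map norm).sum - 1 - (l.map norm).sum := by
  induction l with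
  | nil => simp
  | cons x t ih =>
    have hs0 : 0 ≤ (t.map norm).sum := trotter_list_norm_sum_nonneg t
    have hS : ‖t.sum‖ ≤ (t.map norm).sum := trotter_list_norm_sum_le t
    have key : ((x :: t).map fun y => NormedSpace.exp y).prod - 1 - (x :: t).sum
        = exp x * ((t.map fun y => NormedSpace.exp y).prod - 1 - t.sum)
          + (exp x - 1 - x) + (exp x - 1) * t.sum := by
      simp only [List.map_cons, List.prod_cons, List.sum_cons]
      noncomm_ring
    rw [key]
    have h1 := trotter_norm_exp_le x
    have h2 := trotter_norm_exp_sub_one_sub_le x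
    have h3 := trotter_norm_exp_sub_one_le x
    have e1 : ‖exp x * ((t.map fun y => NormedSpace.exp y).prod - 1 - t.sum)‖
        ≤ Real.exp ‖x‖ * (Real.exp (t.map norm).sum - 1 - (t.map norm).sum) :=
      (norm_mul_le _ _).trans (mul_le_mul h1 ih (norm_nonneg _) (Real.exp_nonneg _))
    have e2 : ‖(exp x - 1) * t.sum‖ ≤ (Real.exp ‖x‖ - 1) * (t.map norm).sum :=
      (norm_mul_le _ _).trans (mul_le_mul h3 hS (norm_nonneg _)
        (by nlinarith [Real.add_one_le_exp ‖x‖, norm_nonneg x]))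
    have tri := norm_add₃_le (a := exp x * ((t.map fun y => NormedSpace.exp y).prod - 1 - t.sum))
      (b := exp x - 1 - x) (c := (exp x - 1) * t.sum)
    have hsum : Real.exp ‖x‖ * (Real.exp (t.map norm).sum - 1 - (t.map norm).sum)
        + (Real.exp ‖x‖ - 1 - ‖x‖) + (Real.exp ‖x‖ - 1) * (t.map norm).sum
        = Real.exp (‖x‖ + (t.map norm).sum) - 1 - (‖x‖ + (t.map norm).sum) := by
      rw [Real.exp_add]; ring
    simp only [List.map_cons, List.sum_cons]
    linarith

private lemma trotter_exp_sub_prod_le [NormOneClass 𝔸] (l : List 𝔸) :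
    ‖exp l.sum - (l.map fun x => NormedSpace.exp x).prod‖
      ≤ 2 * (Real.exp (l.map norm).sum - 1 - (l.map norm).sum) := by
  set s := (l.map norm).sum with hs
  have hS : ‖l.sum‖ ≤ s := trotter_list_norm_sum_le l
  have h1 := trotter_norm_exp_sub_one_sub_le l.sum
  have mono : Real.exp ‖l.sum‖ - 1 - ‖l.sum‖ ≤ Real.exp s - 1 - s := by
    have hx := Real.add_one_le_exp (s - ‖l.sum‖)
    have h2 : Real.exp s = Real.exp (s - ‖l.sum‖) * Real.exp ‖l.sum‖ := by
      rw [← Real.exp_add]; ring_nf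
    nlinarith [Real.one_le_exp (norm_nonneg l.sum)]
  have h3 := trotter_prod_exp_bound l
  have e : exp l.sum - (l.map fun x => NormedSpace.exp x).prod
      = (exp l.sum - 1 - l.sum) - ((l.map fun x => NormedSpace.exp x).prod - 1 - l.sum) := by abel
  rw [e]
  exact (norm_sub_le _ _).trans (by linarith)

private lemma trotter_two_exp_tail_le {s : ℝ} (hs : 0 ≤ s) :
    2 * (Real.exp s - 1 - s) ≤ s ^ 2 * Real.exp s := by
  have hg := (trotter_real_exp_tail_hasSum s).mul_left 2
  have hh : HasSum (fun n : ℕ => s ^ 2 * (s ^ n / n !)) (s ^ 2 * Real.exp s) :=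
    (trotter_real_exp_hasSum s).mul_left _
  refine hasSum_le (fun n => ?_) hg hh
  have hfac : (2 * n ! : ℝ) ≤ ((n + 2)! : ℝ) := by
    have hn : 2 * n ! ≤ (n + 2)! := by
      have h1 : (n + 2)! = (n + 2) * ((n + 1) * n !) := rfl
      rw [h1]
      exact Nat.mul_le_mul (by omega) (Nat.le_mul_of_pos_left _ (Nat.succ_pos n))
    exact_mod_cast hn
  have hfac0 : (0:ℝ) < (n ! : ℝ) := by positivity
  have hfac2 : (0:ℝ) < ((n + 2)! : ℝ) := by positivity
  have hdiv : (2:ℝ) / ((n + 2)! : ℝ) ≤ 1 / (n ! : ℝ) := by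
    rw [div_le_div_iff₀ hfac2 hfac0]
    linarith
  calc 2 * (s ^ (n + 2) / (n + 2)!) = s ^ 2 * s ^ n * (2 / ((n + 2)! : ℝ)) := by
        rw [pow_add]; ring
    _ ≤ s ^ 2 * s ^ n * (1 / (n ! : ℝ)) := by
        apply mul_le_mul_of_nonneg_left hdiv
        positivity
    _ = s ^ 2 * (s ^ n / n !) := by ring

private lemma trotter_pow_sub_pow_le [NormOneClass 𝔸] (A B : 𝔸)
    (hA : ‖A‖ ≤ 1) (hB : ‖B‖ ≤ 1) (n : ℕ) :
    ‖A ^ n - B ^ n‖ ≤ n * ‖A - B‖ := by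
  induction n with
  | zero => simp
  | succ n ih =>
    have key : A ^ (n + 1) - B ^ (n + 1) = A * (A ^ n - B ^ n) + (A - B) * B ^ n := by
      rw [pow_succ', pow_succ']
      noncomm_ring
    have hBn : ‖B ^ n‖ ≤ 1 := by
      rcases Nat.eq_zero_or_pos n with h | h
      · simp [h]
      · exact (norm_pow_le' B h).trans (pow_le_one₀ (norm_nonneg _) hB)
    have e1 : ‖A * (A ^ n - B ^ n)‖ ≤ n * ‖A - B‖ :=
      (norm_mul_le _ _).trans <| by
        calc ‖A‖ * ‖A ^ n - B ^ n‖ ≤ 1 * (n * ‖A - B‖) :=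
            mul_le_mul hA ih (norm_nonneg _) zero_le_one
        _ = n * ‖A - B‖ := one_mul _
    have e2 : ‖(A - B) * B ^ n‖ ≤ ‖A - B‖ :=
      (norm_mul_le _ _).trans <| by
        calc ‖A - B‖ * ‖B ^ n‖ ≤ ‖A - B‖ * 1 :=
            mul_le_mul_of_nonneg_left hBn (norm_nonneg _)
        _ = ‖A - B‖ := mul_one _
    calc ‖A ^ (n + 1) - B ^ (n + 1)‖ ≤ ‖A * (A ^ n - B ^ n)‖ + ‖(A - B) * B ^ n‖ := by
          rw [key]; exact norm_add_le _ _
      _ ≤ n * ‖A - B‖ + ‖A - B‖ := add_le_add e1 e2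
      _ = (n + 1 : ℕ) * ‖A - B‖ := by push_cast; ring

end TrotterAux

/-- Repeated Trotter error bound: for Hermitian `H 1, …, H L` with `Λ = Σ_j ‖H_j‖`,
time `T ≥ 0` and Trotterization number `R > 0`,
`‖exp(-iT Σ_j H_j) - (Π_j exp(-i(T/R)H_j))^R‖ ≤ ((ΛT)²/R)·e^{ΛT/R}`. -/
theorem repeated_trotter_bound {N L : ℕ} (H : Fin L → Matrix (Fin N) (Fin N) ℂ)
    (hH : ∀ j, (H j).IsHermitian) (T : ℝ) (hT : 0 ≤ T) (R : ℕ) (hR : 0 < R)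
    (Λ : ℝ) (hΛ : Λ = ∑ j : Fin L, ‖H j‖) :
    ‖NormedSpace.exp ((-(Complex.I * T)) • ∑ j : Fin L, H j)
        - ((List.ofFn fun j : Fin L =>
            NormedSpace.exp ((-(Complex.I * (T / R))) • H j)).prod) ^ R‖
      ≤ (Λ * T) ^ 2 / R * Real.exp (Λ * T / R) := by
  have hΛ0 : 0 ≤ Λ := by
    rw [hΛ]; exact Finset.sum_nonneg fun j _ => norm_nonneg _
  have hR0 : (0:ℝ) < (R:ℝ) := by exact_mod_cast hR
  rcases Nat.eq_zero_or_pos N with hN | hN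
  · subst hN
    have hz : ∀ M : Matrix (Fin 0) (Fin 0) ℂ, M = 0 := fun M => by
      ext i j; exact i.elim0
    rw [hz (NormedSpace.exp ((-(Complex.I * T)) • ∑ j : Fin L, H j)
        - ((List.ofFn fun j : Fin L =>
            NormedSpace.exp ((-(Complex.I * (T / R))) • H j)).prod) ^ R)]
    rw [norm_zero]
    positivity
  · haveI : Nontrivial (Matrix (Fin N) (Fin N) ℂ) := by
      obtain ⟨i⟩ : Nonempty (Fin N) := ⟨⟨0, hN⟩⟩
      refine ⟨0, 1, fun h => ?_⟩
      have := congrFun (congrFun h i) i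
      simp [Matrix.one_apply_eq] at this
    letI : NormedAlgebra ℚ (Matrix (Fin N) (Fin N) ℂ) :=
      NormedAlgebra.restrictScalars ℚ ℂ (Matrix (Fin N) (Fin N) ℂ)
    set c : ℂ := -(Complex.I * ((T:ℂ) / (R:ℂ))) with hc
    -- the scalar has norm T / R
    have hcr : (T:ℂ) / (R:ℂ) = ((T / R : ℝ) : ℂ) := by push_cast; ring
    have hcnorm : ‖c‖ = T / R := by
      rw [hc, norm_neg, norm_mul, hcr, Complex.norm_I, one_mul, Complex.norm_real,
        Real.norm_eq_abs, _root_.abs_of_nonneg (div_nonneg hT hR0.le)]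
    -- skew-adjointness and unitarity
    have hskew : ∀ M : Matrix (Fin N) (Fin N) ℂ, M.IsHermitian →
        c • M ∈ skewAdjoint (Matrix (Fin N) (Fin N) ℂ) := by
      intro M hM
      have hstarc : star c = -c := by
        rw [hc, hcr]
        simp [Complex.conj_I, Complex.conj_ofReal]
      rw [skewAdjoint.mem_iff, star_smul, hstarc, Matrix.star_eq_conjTranspose, hM.eq, neg_smul]
    have hnorm_exp : ∀ M : Matrix (Fin N) (Fin N) ℂ, M.IsHermitian →
        ‖NormedSpace.exp (c • M)‖ = 1 := fun M hM =>
      CStarRing.norm_of_mem_unitary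
        (NormedSpace.exp_mem_unitary_of_mem_skewAdjoint (hskew M hM))
    have hsum_herm : (∑ j : Fin L, H j).IsHermitian := by
      show (∑ j : Fin L, H j)ᴴ = ∑ j : Fin L, H j
      rw [Matrix.conjTranspose_sum]
      exact Finset.sum_congr rfl fun j _ => (hH j).eq
    -- list setup
    set l : List (Matrix (Fin N) (Fin N) ℂ) := List.ofFn (fun j : Fin L => c • H j) with hl
    have hlsum : l.sum = c • ∑ j : Fin L, H j := by
      rw [hl, List.sum_ofFn, Finset.smul_sum]
    have hlmap : (l.map fun x => NormedSpace.exp x)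
        = List.ofFn fun j : Fin L => NormedSpace.exp (c • H j) := by
      rw [hl, List.map_ofFn]; rfl
    have hlnorm : (l.map norm).sum = Λ * T / R := by
      rw [hl, List.map_ofFn]
      rw [List.sum_ofFn]
      have : ∀ j : Fin L, (norm ∘ fun j : Fin L => c • H j) j = T / R * ‖H j‖ := by
        intro j
        simp [norm_smul, hcnorm]
      rw [Finset.sum_congr rfl fun j _ => this j, ← Finset.mul_sum, ← hΛ]
      ring
    set s : ℝ := Λ * T / R with hsdef
    have hs0 : 0 ≤ s := by positivity
    -- the two one-step operators
    set A : Matrix (Fin N) (Fin N) ℂ := NormedSpace.exp (c • ∑ j : Fin L, H j) with hA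
    set B : Matrix (Fin N) (Fin N) ℂ :=
      (List.ofFn fun j : Fin L => NormedSpace.exp (c • H j)).prod with hB
    have hAnorm : ‖A‖ ≤ 1 := le_of_eq (hnorm_exp _ hsum_herm)
    have hBnorm : ‖B‖ ≤ 1 := by
      refine (List.norm_prod_le _).trans ?_
      rw [List.map_ofFn]
      have : (List.ofFn (norm ∘ fun j : Fin L => NormedSpace.exp (c • H j)))
          = List.ofFn (fun _ : Fin L => (1:ℝ)) := by
        congr 1
        funext j
        exact hnorm_exp _ (hH j)
      rw [this, List.prod_ofFn]
      simp
    -- exp splits into R-th power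
    have hsplit : NormedSpace.exp ((-(Complex.I * T)) • ∑ j : Fin L, H j) = A ^ R := by
      have h1 : ((R:ℕ):ℂ) * c = -(Complex.I * (T:ℂ)) := by
        rw [hc]
        have : ((R:ℕ):ℂ) ≠ 0 := Nat.cast_ne_zero.mpr hR.ne'
        field_simp
      rw [hA, ← NormedSpace.exp_nsmul, ← Nat.cast_smul_eq_nsmul ℂ R, smul_smul, h1]
    -- the statement's scalar equals c
    have hcoef : (-(Complex.I * ((T:ℝ) / (R:ℕ)) ) : ℂ) = c := by rw [hc]
    -- one-step bound
    have hstep : ‖A - B‖ ≤ 2 * (Real.exp s - 1 - s) := by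
      have h := trotter_exp_sub_prod_le l
      rw [hlsum, hlmap, hlnorm] at h
      exact h
    have hstep2 : ‖A - B‖ ≤ s ^ 2 * Real.exp s :=
      hstep.trans (trotter_two_exp_tail_le hs0)
    -- telescoping
    have htel := trotter_pow_sub_pow_le A B hAnorm hBnorm R
    have hfinal : ‖A ^ R - B ^ R‖ ≤ (R:ℝ) * (s ^ 2 * Real.exp s) :=
      htel.trans (mul_le_mul_of_nonneg_left hstep2 (by positivity))
    have hrhs : (R:ℝ) * (s ^ 2 * Real.exp s) = (Λ * T) ^ 2 / R * Real.exp (Λ * T / R) := by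
      rw [hsdef]
      field_simp
    rw [hsplit, hB]
    calc ‖A ^ R - ((List.ofFn fun j : Fin L =>
            NormedSpace.exp ((-(Complex.I * (T / R))) • H j)).prod) ^ R‖
        = ‖A ^ R - B ^ R‖ := by rw [hB]
      _ ≤ (R:ℝ) * (s ^ 2 * Real.exp s) := hfinal
      _ = (Λ * T) ^ 2 / R * Real.exp (Λ * T / R) := hrhs
end

section
/- Discretization error bound for a time-dependent Hamiltonian: let H(t) = Σ_{k=1}^K α_k(t) H_k with ‖H_k‖ = 1 and each α_k an M-Lipschitz function on [0,T]. Let 0 = t_1 < t_2 < ... < t_{D+1} = T be a uniform partition with step T/D, and let H̃(t) be the piecewise-constant Hamiltonian equal to H(t_d) on [t_d, t_{d+1}). Then the unitaries U(T) and Ũ(T) generated by evolving under H(t) and H̃(t) respectively over [0,T] satisfy ‖U(T) - Ũ(T)‖ ≤ C·MKT²/D for an absolute constant C > 0 (one may take C = 1). -/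
open Matrix Complex
open scoped Matrix.Norms.L2Operator

lemma aux_norm_one_le {n : ℕ} : ‖(1 : Matrix (Fin n) (Fin n) ℂ)‖ ≤ 1 := by
  have h := CStarRing.norm_star_mul_self (x := (1 : Matrix (Fin n) (Fin n) ℂ))
  simp only [star_one, one_mul] at h
  nlinarith [norm_nonneg (1 : Matrix (Fin n) (Fin n) ℂ)]

lemma aux_norm_le_one {n : ℕ} {A : Matrix (Fin n) (Fin n) ℂ}
    (h : star A * A = 1) : ‖A‖ ≤ 1 := by
  have h2 := CStarRing.norm_star_mul_self (x := A)
  rw [h] at h2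
  nlinarith [norm_nonneg A, aux_norm_one_le (n := n)]

lemma aux_norm_exp_le_one {n : ℕ} {B : Matrix (Fin n) (Fin n) ℂ} (hB : star B = -B) :
    ‖NormedSpace.exp B‖ ≤ 1 := by
  apply aux_norm_le_one
  rw [NormedSpace.star_exp, hB, ← Matrix.exp_add_of_commute _ _ ((Commute.refl B).neg_left),
    neg_add_cancel, NormedSpace.exp_zero]

/-- Discretization error bound for a time-dependent Hamiltonian
`H(t) = Σ_k α_k(t) H_k` with `‖H_k‖ = 1` and `α_k` `M`-Lipschitz on `[0, T]`.
The unitary `U` solves `U'(t) = -i H(t) U(t)`, `U(0) = 1`, and `Ũ(T)` is the ordered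
product (from `d = D-1` down to `d = 0`) of `exp(-i(T/D) H(d·T/D))`, i.e. the evolution
under the piecewise-constant Hamiltonian using the left endpoints of a uniform partition
with step `T/D`. Then `‖U(T) - Ũ(T)‖ ≤ M K T² / D` (absolute constant `C = 1`). -/
theorem discretization_error_bound {N K : ℕ}
    (Hk : Fin K → Matrix (Fin N) (Fin N) ℂ) (hHerm : ∀ k, (Hk k).IsHermitian)
    (hNorm : ∀ k, ‖Hk k‖ = 1)
    (T M : ℝ) (hT : 0 < T) (hM : 0 ≤ M)
    (α : Fin K → ℝ → ℝ)
    (hα : ∀ k, LipschitzOnWith (Real.toNNReal M) (α k) (Set.Icc 0 T))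
    (D : ℕ) (hD : 0 < D)
    (U : ℝ → Matrix (Fin N) (Fin N) ℂ)
    (hU0 : U 0 = 1)
    (hU : ∀ t ∈ Set.Icc (0 : ℝ) T,
      HasDerivAt U ((-Complex.I) • ((∑ k : Fin K, (α k t : ℂ) • Hk k) * U t)) t) :
    ‖U T - ((List.ofFn fun d : Fin D =>
        NormedSpace.exp ((-(Complex.I * (T / D))) •
          ∑ k : Fin K, (α k (d * (T / D)) : ℂ) • Hk k)).reverse).prod‖
      ≤ M * K * T ^ 2 / D := by
  have hDR : (0:ℝ) < D := by exact_mod_cast hD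
  set δ : ℝ := T / D with hδdef
  have hδ : 0 < δ := div_pos hT hDR
  set A : ℝ → Matrix (Fin N) (Fin N) ℂ := fun s => ∑ k : Fin K, (α k s : ℂ) • Hk k with hAdef
  -- A is Hermitian-valued
  have hAstar : ∀ s, star (A s) = A s := by
    intro s
    simp only [hAdef, star_sum, star_smul, RCLike.star_def, Complex.conj_ofReal]
    exact Finset.sum_congr rfl fun k _ => by
      rw [Matrix.star_eq_conjTranspose, (hHerm k).eq]
  -- Lipschitz bound on A
  have hAdiff : ∀ s ∈ Set.Icc (0:ℝ) T, ∀ t ∈ Set.Icc (0:ℝ) T,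
      ‖A s - A t‖ ≤ M * K * |s - t| := by
    intro s hs t ht
    have hrw : A s - A t = ∑ k : Fin K, ((α k s - α k t : ℝ) : ℂ) • Hk k := by
      rw [hAdef, ← Finset.sum_sub_distrib]
      exact Finset.sum_congr rfl fun k _ => by push_cast; rw [sub_smul]
    rw [hrw]
    calc ‖∑ k : Fin K, ((α k s - α k t : ℝ) : ℂ) • Hk k‖
        ≤ ∑ k : Fin K, ‖((α k s - α k t : ℝ) : ℂ) • Hk k‖ := norm_sum_le _ _
      _ = ∑ k : Fin K, |α k s - α k t| := by
          simp [norm_smul, hNorm, ← Complex.ofReal_sub, Complex.norm_real]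
      _ ≤ ∑ _k : Fin K, M * |s - t| := by
          apply Finset.sum_le_sum
          intro k _
          have h := (hα k).dist_le_mul s hs t ht
          rw [Real.coe_toNNReal _ hM] at h
          simpa [Real.dist_eq] using h
      _ = M * K * |s - t| := by
          simp [Finset.sum_const, Finset.card_univ, nsmul_eq_mul]; ring
  -- U is unitary on [0, T]
  have hG : ∀ t ∈ Set.Icc (0:ℝ) T, star (U t) * U t = 1 := by
    have hderiv : ∀ t ∈ Set.Icc (0:ℝ) T,
        HasDerivAt (fun t => star (U t) * U t) 0 t := by
      intro t ht
      have h1 := ((hU t ht).star.mul (hU t ht))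
      convert h1 using 1
      case e'_4 => rfl
      case e'_5 => rfl
      case e'_6 => rfl
      case e'_8 => rfl
      have hfold : (∑ k : Fin K, (α k t : ℂ) • Hk k) = A t := rfl
      rw [hfold, star_smul, Matrix.star_mul, hAstar]
      simp only [star_neg, Complex.star_def, Complex.conj_I, neg_neg, smul_mul_assoc,
        mul_smul_comm, mul_assoc]
      rw [← add_smul]
      simp
    have hcont : ContinuousOn (fun t => star (U t) * U t) (Set.Icc 0 T) :=
      fun t ht => (hderiv t ht).continuousAt.continuousWithinAt
    have hconst := constant_of_has_deriv_right_zero hcont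
      (fun t ht => (hderiv t (Set.Ico_subset_Icc_self ht)).hasDerivWithinAt)
    intro t ht
    have h := hconst t ht
    simpa [hU0] using h
  have hUnorm : ∀ t ∈ Set.Icc (0:ℝ) T, ‖U t‖ ≤ 1 := fun t ht => aux_norm_le_one (hG t ht)
  -- the generators of the discrete evolution
  set x : ℕ → Matrix (Fin N) (Fin N) ℂ := fun d => (-Complex.I) • A (d * δ) with hxdef
  have hxskew : ∀ (r : ℝ) (d : ℕ), star ((r : ℂ) • x d) = -((r : ℂ) • x d) := by
    intro r d
    have h1 : star (x d) = -(x d) := by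
      show star ((-Complex.I) • A (d * δ)) = -((-Complex.I) • A (d * δ))
      rw [star_smul, hAstar]
      simp
    rw [star_smul, h1, Complex.star_def, Complex.conj_ofReal, smul_neg]
  have hWnorm : ∀ (r : ℝ) (d : ℕ), ‖NormedSpace.exp ((r : ℂ) • x d)‖ ≤ 1 :=
    fun r d => aux_norm_exp_le_one (hxskew r d)
  have hDne : (D:ℝ) ≠ 0 := ne_of_gt hDR
  have hDδ : (D : ℝ) * δ = T := by rw [hδdef]; field_simp
  -- per-interval bound
  have hstep : ∀ d : ℕ, d + 1 ≤ D →
      ‖U ((d+1) * δ) - NormedSpace.exp ((δ : ℂ) • x d) * U (d * δ)‖ ≤ M * K * δ ^ 2 := by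
    intro d hdD
    have htd0 : (0:ℝ) ≤ (d:ℝ) * δ := by positivity
    have hd1T : ((d:ℝ)+1) * δ ≤ T := by
      have h1 : ((d:ℝ)+1) ≤ (D:ℝ) := by exact_mod_cast hdD
      calc ((d:ℝ)+1)*δ ≤ (D:ℝ)*δ := by nlinarith [hδ.le]
        _ = T := hDδ
    have hsub : Set.Icc ((d:ℝ)*δ) (((d:ℝ)+1)*δ) ⊆ Set.Icc 0 T :=
      Set.Icc_subset_Icc htd0 hd1T
    have hddle : (d:ℝ)*δ ≤ ((d:ℝ)+1)*δ := by nlinarith [hδ.le]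
    have htdT : (d:ℝ)*δ ∈ Set.Icc (0:ℝ) T := hsub (Set.left_mem_Icc.2 hddle)
    set E : ℝ → Matrix (Fin N) (Fin N) ℂ :=
      fun s => NormedSpace.exp ((((d:ℝ)*δ - s : ℝ) : ℂ) • x d) * U s with hEdef
    have hEderiv : ∀ s ∈ Set.Icc ((d:ℝ)*δ) (((d:ℝ)+1)*δ),
        HasDerivAt E (NormedSpace.exp ((((d:ℝ)*δ - s : ℝ) : ℂ) • x d) *
          ((-Complex.I) • ((A s - A ((d:ℝ)*δ)) * U s))) s := by
      intro s hs
      have hsT : s ∈ Set.Icc (0:ℝ) T := hsub hs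
      have hg : HasDerivAt (fun u : ℝ => (((d:ℝ)*δ - u : ℝ) : ℂ)) (-1) s := by
        have heq : (fun u : ℝ => (((d:ℝ)*δ - u : ℝ) : ℂ))
            = fun u : ℝ => (((d:ℝ)*δ : ℝ):ℂ) - (u:ℂ) := by
          funext u; push_cast; ring
        rw [heq]
        simpa using Complex.ofRealCLM.hasDerivAt.const_sub (((d:ℝ)*δ : ℝ):ℂ)
      have hexp := (hasDerivAt_exp_smul_const (𝕂 := ℂ) (x d)
        ((((d:ℝ)*δ - s : ℝ) : ℂ))).scomp s hg
      have hprod := hexp.mul (hU s hsT)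
      convert hprod using 1
      case e'_4 => rfl
      case e'_5 => rfl
      case e'_6 => rfl
      case e'_8 => rfl
      have hfold : (∑ k : Fin K, (α k s : ℂ) • Hk k) = A s := rfl
      rw [hfold]
      simp only [Function.comp_apply, Function.comp, hxdef, mul_smul_comm, smul_mul_assoc,
        smul_smul, sub_mul, mul_sub, smul_sub, mul_neg, neg_mul, mul_assoc, neg_smul, one_smul, neg_neg, sub_smul]
      module
    have hbound : ∀ s ∈ Set.Ico ((d:ℝ)*δ) (((d:ℝ)+1)*δ),
        ‖NormedSpace.exp ((((d:ℝ)*δ - s : ℝ) : ℂ) • x d) *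
          ((-Complex.I) • ((A s - A ((d:ℝ)*δ)) * U s))‖ ≤ M * K * δ := by
      intro s hs
      have hsIcc := Set.Ico_subset_Icc_self hs
      have hsT : s ∈ Set.Icc (0:ℝ) T := hsub hsIcc
      have h1 : ‖NormedSpace.exp ((((d:ℝ)*δ - s:ℝ):ℂ) • x d)‖ ≤ 1 := hWnorm _ d
      have h2 : ‖A s - A ((d:ℝ)*δ)‖ ≤ M * K * δ := by
        refine (hAdiff s hsT ((d:ℝ)*δ) htdT).trans ?_
        have habs : |s - (d:ℝ)*δ| ≤ δ := by
          rw [_root_.abs_of_nonneg (by linarith [hsIcc.1])]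
          have := hsIcc.2; nlinarith
        have hMK : (0:ℝ) ≤ M * K := mul_nonneg hM (Nat.cast_nonneg K)
        nlinarith
      have h3 : ‖(-Complex.I) • ((A s - A ((d:ℝ)*δ)) * U s)‖ ≤ M * K * δ := by
        rw [norm_smul]
        have hnI : ‖(-Complex.I : ℂ)‖ = 1 := by simp
        rw [hnI, one_mul]
        calc ‖(A s - A ((d:ℝ)*δ)) * U s‖ ≤ ‖A s - A ((d:ℝ)*δ)‖ * ‖U s‖ := norm_mul_le _ _
          _ ≤ (M*K*δ) * 1 := mul_le_mul h2 (hUnorm s hsT) (norm_nonneg _) (by positivity)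
          _ = M*K*δ := mul_one _
      calc ‖_ * _‖ ≤ ‖NormedSpace.exp ((((d:ℝ)*δ - s:ℝ):ℂ) • x d)‖
            * ‖(-Complex.I) • ((A s - A ((d:ℝ)*δ)) * U s)‖ := norm_mul_le _ _
        _ ≤ 1 * (M*K*δ) := mul_le_mul h1 h3 (norm_nonneg _) zero_le_one
        _ = M*K*δ := one_mul _
    have key := norm_image_sub_le_of_norm_deriv_le_segment'
      (fun s hs => (hEderiv s hs).hasDerivWithinAt) hbound (((d:ℝ)+1)*δ)
      (Set.right_mem_Icc.2 hddle)
    have hE0 : E ((d:ℝ)*δ) = U ((d:ℝ)*δ) := by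
      simp only [hEdef, sub_self, Complex.ofReal_zero, zero_smul, NormedSpace.exp_zero, one_mul]
    have hcomm : Commute ((δ:ℂ) • x d) ((((d:ℝ)*δ - ((d:ℝ)+1)*δ : ℝ):ℂ) • x d) :=
      ((Commute.refl (x d)).smul_left _).smul_right _
    have hWE : NormedSpace.exp ((δ:ℂ) • x d) * E (((d:ℝ)+1)*δ) = U (((d:ℝ)+1)*δ) := by
      show NormedSpace.exp ((δ:ℂ) • x d) *
        (NormedSpace.exp ((((d:ℝ)*δ - ((d:ℝ)+1)*δ : ℝ):ℂ) • x d) * U (((d:ℝ)+1)*δ)) = _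
      rw [← mul_assoc, ← Matrix.exp_add_of_commute _ _ hcomm]
      have hzero : (δ:ℂ) • x d + ((((d:ℝ)*δ - ((d:ℝ)+1)*δ : ℝ)):ℂ) • x d = (0:ℂ) • x d := by
        rw [← add_smul]; congr 1; push_cast; ring
      rw [hzero, zero_smul, NormedSpace.exp_zero, one_mul]
    have hsplit2 : U (((d:ℝ)+1)*δ) - NormedSpace.exp ((δ:ℂ) • x d) * U ((d:ℝ)*δ)
        = NormedSpace.exp ((δ:ℂ) • x d) * (E (((d:ℝ)+1)*δ) - E ((d:ℝ)*δ)) := by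
      rw [mul_sub, hWE, hE0]
    rw [hsplit2]
    calc ‖_ * _‖ ≤ ‖NormedSpace.exp ((δ:ℂ) • x d)‖
          * ‖E (((d:ℝ)+1)*δ) - E ((d:ℝ)*δ)‖ := norm_mul_le _ _
      _ ≤ 1 * (M*K*δ * ((((d:ℝ)+1)*δ) - (d:ℝ)*δ)) :=
          mul_le_mul (hWnorm δ d) key (norm_nonneg _) zero_le_one
      _ = M*K*δ^2 := by ring
  -- main induction
  have main : ∀ d : ℕ, d ≤ D →
      ‖U (d * δ) - ((List.ofFn fun j : Fin d =>
          NormedSpace.exp ((δ : ℂ) • x j)).reverse).prod‖ ≤ M * K * δ ^ 2 * d := by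
    intro d
    induction d with
    | zero => intro _; simp [hU0]
    | succ d ih =>
      intro hdD
      have hd := ih (Nat.le_of_succ_le hdD)
      have hlist : ((List.ofFn fun j : Fin (d+1) =>
            NormedSpace.exp ((δ : ℂ) • x j)).reverse).prod
          = NormedSpace.exp ((δ : ℂ) • x d) *
            ((List.ofFn fun j : Fin d => NormedSpace.exp ((δ : ℂ) • x j)).reverse).prod := by
        rw [List.ofFn_succ']
        simp [List.reverse_concat, Fin.coe_castSucc, Fin.val_last]
      have hsplit : U ((d+1 : ℕ) * δ) - ((List.ofFn fun j : Fin (d+1) =>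
            NormedSpace.exp ((δ : ℂ) • x j)).reverse).prod
          = (U ((d+1 : ℕ) * δ) - NormedSpace.exp ((δ : ℂ) • x d) * U (d * δ))
            + NormedSpace.exp ((δ : ℂ) • x d) *
              (U (d * δ) - ((List.ofFn fun j : Fin d =>
                NormedSpace.exp ((δ : ℂ) • x j)).reverse).prod) := by
        rw [hlist, mul_sub]; abel
      rw [hsplit]
      calc ‖_ + _‖ ≤ ‖U ((d+1 : ℕ) * δ) - NormedSpace.exp ((δ : ℂ) • x d) * U (d * δ)‖
            + ‖NormedSpace.exp ((δ : ℂ) • x d) *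
              (U (d * δ) - ((List.ofFn fun j : Fin d =>
                NormedSpace.exp ((δ : ℂ) • x j)).reverse).prod)‖ := norm_add_le _ _
        _ ≤ M * K * δ ^ 2 + 1 * (M * K * δ ^ 2 * d) := by
            apply add_le_add
            · have h2 := hstep d hdD
              have h3 : ((d+1 : ℕ) : ℝ) * δ = ((d:ℝ) + 1) * δ := by push_cast; ring
              rw [h3]; exact h2
            · exact (norm_mul_le _ _).trans
                (mul_le_mul (hWnorm δ d) hd (norm_nonneg _) zero_le_one)
        _ = M * K * δ ^ 2 * ((d+1 : ℕ) : ℝ) := by push_cast; ring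
  -- conclude
  have hfin := main D le_rfl
  have hlisteq : (List.ofFn fun d : Fin D =>
      NormedSpace.exp ((-(Complex.I * (T / D))) •
        ∑ k : Fin K, (α k (d * (T / D)) : ℂ) • Hk k))
      = List.ofFn fun j : Fin D => NormedSpace.exp ((δ : ℂ) • x j) := by
    apply congrArg
    funext d
    congr 1
    simp only [hxdef, hAdef, smul_smul, hδdef]
    congr 1
    push_cast; ring
  rw [hDδ] at hfin
  rw [hlisteq]
  refine hfin.trans (le_of_eq ?_)
  rw [hδdef]
  field_simp
end
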